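/- (Optimal isotropy group of Case 7) Let u₀ ∈ ℝ³, u₀ ≠ 0, and let S = J⁻¹(0,u₀) ∩ M_{G⁴}. Then an element (A,a) ∈ SE(3) satisfies (A,a)·S = S if and only if Au₀ = u₀ and a = ξu₀ for some ξ ∈ ℝ. Moreover this group acts freely on S. -/

import Mathlib

open Matrix

/-- Vectors in ℝ³. -/
abbrev V3 : Type := Fin 3 → ℝ

/-- The two-body phase space M = ℝ³ × ℝ³ × ℝ³ × ℝ³, points (q¹, q², p¹, p²). -/
abbrev M2B : Type := V3 × V3 × V3 × V3

/-- A 3×3 real matrix is special orthogonal. -/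
def SO3 (A : Matrix (Fin 3) (Fin 3) ℝ) : Prop := Aᵀ * A = 1 ∧ A.det = 1

/-- The action of (A, a) ∈ SE(3) on the phase space:
(A,a)·(q¹,q²,p¹,p²) = (Aq¹+a, Aq²+a, Ap¹, Ap²). -/
def act (A : Matrix (Fin 3) (Fin 3) ℝ) (a : V3) (m : M2B) : M2B :=
  (A *ᵥ m.1 + a, A *ᵥ m.2.1 + a, A *ᵥ m.2.2.1, A *ᵥ m.2.2.2)

/-- The isotropy subgroup SE(3)_{(q,p)} of a point of M, as a set of pairs (A,a)
with A special orthogonal. -/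
def isotropy (m : M2B) : Set (Matrix (Fin 3) (Fin 3) ℝ × V3) :=
  {g | SO3 g.1 ∧ act g.1 g.2 m = m}

/-- The momentum map J(q¹,q²,p¹,p²) = (q¹×p¹ + q²×p², p¹+p²). -/
def Jmom (m : M2B) : V3 × V3 :=
  (m.1 ⨯₃ m.2.2.1 + m.2.1 ⨯₃ m.2.2.2, m.2.2.1 + m.2.2.2)

/-- G¹(x) = {(A,a) ∈ SE(3) : a = x − Ax}. -/
def G1 (x : V3) : Set (Matrix (Fin 3) (Fin 3) ℝ × V3) :=
  {g | SO3 g.1 ∧ g.2 = x - g.1 *ᵥ x}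

/-- G²(y) = {(A,0) ∈ SE(3) : Ay = y}. -/
def G2 (y : V3) : Set (Matrix (Fin 3) (Fin 3) ℝ × V3) :=
  {g | SO3 g.1 ∧ g.1 *ᵥ y = y ∧ g.2 = 0}

/-- G³(x,y) = {(A,a) ∈ SE(3) : Ay = y and a = x − Ax}. -/
def G3 (x y : V3) : Set (Matrix (Fin 3) (Fin 3) ℝ × V3) :=
  {g | SO3 g.1 ∧ g.1 *ᵥ y = y ∧ g.2 = x - g.1 *ᵥ x}

/-- G⁴ = {(I, 0)}, the trivial subgroup. -/
def G4 : Set (Matrix (Fin 3) (Fin 3) ℝ × V3) := {((1 : Matrix (Fin 3) (Fin 3) ℝ), (0 : V3))}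

section Stmt16Aux

lemma so3_AAt {A : Matrix (Fin 3) (Fin 3) ℝ} (hA : SO3 A) : A * Aᵀ = 1 := by
  rw [mul_eq_one_comm]; exact hA.1

lemma so3_one' : SO3 (1 : Matrix (Fin 3) (Fin 3) ℝ) := by constructor <;> simp [SO3]

lemma so3_transpose {A : Matrix (Fin 3) (Fin 3) ℝ} (hA : SO3 A) : SO3 Aᵀ :=
  ⟨by rw [Matrix.transpose_transpose]; exact so3_AAt hA, by rw [Matrix.det_transpose]; exact hA.2⟩

lemma so3_mul {A B : Matrix (Fin 3) (Fin 3) ℝ} (hA : SO3 A) (hB : SO3 B) : SO3 (A * B) := by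
  constructor
  · rw [Matrix.transpose_mul, Matrix.mul_assoc, ← Matrix.mul_assoc Aᵀ A B, hA.1,
      Matrix.one_mul, hB.1]
  · rw [Matrix.det_mul, hA.2, hB.2, one_mul]

lemma cross_det (A : Matrix (Fin 3) (Fin 3) ℝ) (x y : V3) :
    Aᵀ *ᵥ ((A *ᵥ x) ⨯₃ (A *ᵥ y)) = A.det • (x ⨯₃ y) := by
  funext i
  fin_cases i <;>
  · simp [crossProduct, mulVec, dotProduct, Matrix.det_fin_three, Fin.sum_univ_three,
      Matrix.transpose_apply]
    ring

lemma so3_cross {A : Matrix (Fin 3) (Fin 3) ℝ} (hA : SO3 A) (x y : V3) :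
    (A *ᵥ x) ⨯₃ (A *ᵥ y) = A *ᵥ (x ⨯₃ y) := by
  have h := congrArg (A *ᵥ ·) (cross_det A x y)
  simp only [Matrix.mulVec_mulVec, so3_AAt hA, Matrix.one_mulVec, hA.2, one_smul,
    Matrix.mulVec_smul] at h
  simpa using h

lemma cross_zero_collinear {u a : V3} (hu : u ≠ 0) (h : a ⨯₃ u = 0) : ∃ ξ : ℝ, a = ξ • u := by
  have h0 := congrFun h 0
  have h1 := congrFun h 1
  have h2 := congrFun h 2
  simp [crossProduct] at h0 h1 h2
  have : u 0 ≠ 0 ∨ u 1 ≠ 0 ∨ u 2 ≠ 0 := by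
    by_contra hc; push_neg at hc
    exact hu (funext fun j => by fin_cases j <;> simp [hc.1, hc.2.1, hc.2.2])
  rcases this with hi | hi | hi
  · refine ⟨a 0 / u 0, funext fun j => ?_⟩
    fin_cases j
    · show a 0 = (a 0 / u 0) * u 0; field_simp
    · show a 1 = (a 0 / u 0) * u 1; field_simp; linarith
    · show a 2 = (a 0 / u 0) * u 2; field_simp; linarith
  · refine ⟨a 1 / u 1, funext fun j => ?_⟩
    fin_cases j
    · show a 0 = (a 1 / u 1) * u 0; field_simp; linarith
    · show a 1 = (a 1 / u 1) * u 1; field_simp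
    · show a 2 = (a 1 / u 1) * u 2; field_simp; linarith
  · refine ⟨a 2 / u 2, funext fun j => ?_⟩
    fin_cases j
    · show a 0 = (a 2 / u 2) * u 0; field_simp; linarith
    · show a 1 = (a 2 / u 2) * u 1; field_simp; linarith
    · show a 2 = (a 2 / u 2) * u 2; field_simp

lemma act_act (A B : Matrix (Fin 3) (Fin 3) ℝ) (a b : V3) (m : M2B) :
    act A a (act B b m) = act (A * B) (A *ᵥ b + a) m := by
  simp [act, Matrix.mulVec_add, Matrix.mulVec_mulVec, add_assoc]

lemma act_one (m : M2B) : act 1 0 m = m := by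
  simp [act]

lemma act_inv_left {A : Matrix (Fin 3) (Fin 3) ℝ} (hA : SO3 A) (a : V3) (m : M2B) :
    act Aᵀ (-(Aᵀ *ᵥ a)) (act A a m) = m := by
  rw [act_act, hA.1]
  simpa using act_one m

lemma act_inv_right {A : Matrix (Fin 3) (Fin 3) ℝ} (hA : SO3 A) (a : V3) (m : M2B) :
    act A a (act Aᵀ (-(Aᵀ *ᵥ a)) m) = m := by
  rw [act_act, so3_AAt hA]
  have h : A *ᵥ -(Aᵀ *ᵥ a) + a = 0 := by
    simp [Matrix.mulVec_neg, Matrix.mulVec_mulVec, so3_AAt hA]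
  rw [h]; exact act_one m

lemma mem_isotropy_self (m : M2B) : ((1 : Matrix (Fin 3) (Fin 3) ℝ), (0 : V3)) ∈ isotropy m :=
  ⟨so3_one', act_one m⟩

lemma isotropy_conj {A : Matrix (Fin 3) (Fin 3) ℝ} (hA : SO3 A) (a : V3) {m : M2B}
    (hm : isotropy m = G4) : isotropy (act A a m) = G4 := by
  apply Set.eq_of_subset_of_subset
  · rintro ⟨B, b⟩ ⟨hB, hfix⟩
    dsimp only at hB hfix
    have key : act (Aᵀ * B * A) (Aᵀ *ᵥ (B *ᵥ a + b) + -(Aᵀ *ᵥ a)) m = m := by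
      have h := congrArg (act Aᵀ (-(Aᵀ *ᵥ a))) hfix
      rw [act_act, act_act, act_inv_left hA] at h
      have e2 : Aᵀ *ᵥ (B *ᵥ a + b) + -(Aᵀ *ᵥ a) =
          (Aᵀ * B) *ᵥ a + (Aᵀ *ᵥ b + -(Aᵀ *ᵥ a)) := by
        simp [Matrix.mulVec_add, Matrix.mulVec_mulVec, add_assoc]
      rw [e2]; exact h
    have hBso : SO3 (Aᵀ * B * A) := so3_mul (so3_mul (so3_transpose hA) hB) hA
    have hG : ((Aᵀ * B * A), (Aᵀ *ᵥ (B *ᵥ a + b) + -(Aᵀ *ᵥ a))) ∈ isotropy m := ⟨hBso, key⟩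
    rw [hm] at hG
    simp only [G4, Set.mem_singleton_iff, Prod.mk.injEq] at hG
    obtain ⟨h1, h2⟩ := hG
    have hBeq : B = 1 := by
      have e : (A * Aᵀ) * B * (A * Aᵀ) = A * (Aᵀ * B * A) * Aᵀ := by
        simp only [Matrix.mul_assoc]
      rw [so3_AAt hA, Matrix.one_mul, Matrix.mul_one, h1, Matrix.mul_one] at e
      rw [e, so3_AAt hA]
    have hbeq : b = 0 := by
      rw [hBeq, Matrix.mulVec_add, Matrix.one_mulVec] at h2
      have h3 : Aᵀ *ᵥ b = 0 := by rw [← h2]; abel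
      have h4 := congrArg (A *ᵥ ·) h3
      simpa [Matrix.mulVec_mulVec, so3_AAt hA] using h4
    simp [G4, hBeq, hbeq]
  · rintro g hg
    simp only [G4, Set.mem_singleton_iff] at hg
    subst hg
    exact mem_isotropy_self _

lemma exists_indep {u0 : V3} (hu : u0 ≠ 0) : ∃ v : V3, u0 ⨯₃ v ≠ 0 := by
  by_cases h0 : u0 0 ≠ 0
  · refine ⟨![0,1,0], fun hc => h0 ?_⟩
    have h2 := congrFun hc 2
    simpa [crossProduct] using h2
  · push_neg at h0
    have h12 : u0 1 ≠ 0 ∨ u0 2 ≠ 0 := by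
      by_contra hc; push_neg at hc
      exact hu (funext fun j => by fin_cases j <;> simp [h0, hc.1, hc.2])
    refine ⟨![1,0,0], fun hc => ?_⟩
    have h1 := congrFun hc 1
    have h2 := congrFun hc 2
    simp [crossProduct] at h1 h2
    rcases h12 with h | h
    · exact h h2
    · exact h h1

lemma triple (v u : V3) : v ⬝ᵥ (u ⨯₃ (v ⨯₃ u)) = (v ⨯₃ u) ⬝ᵥ (v ⨯₃ u) := by
  simp [crossProduct, dotProduct, Fin.sum_univ_three]
  ring

lemma m0_mem {u0 v : V3} (hv : u0 ⨯₃ v ≠ 0) :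
    Jmom ((0 : V3), (0 : V3), v, u0 - v) = (0, u0) ∧
    isotropy ((0 : V3), (0 : V3), v, u0 - v) = G4 := by
  constructor
  · refine Prod.ext ?_ ?_
    · show (0 : V3) ⨯₃ v + (0 : V3) ⨯₃ (u0 - v) = 0
      simp
    · show v + (u0 - v) = u0
      abel
  · apply Set.eq_of_subset_of_subset
    · rintro ⟨B, b⟩ ⟨hB, hfix⟩
      dsimp only at hB hfix
      simp only [act, Prod.mk.injEq] at hfix
      obtain ⟨hb1, _, hBv, hBw⟩ := hfix
      have hb : b = 0 := by
        have h := hb1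
        simpa using h
      have hBu : B *ᵥ u0 = u0 := by
        rw [Matrix.mulVec_sub, hBv, sub_left_inj] at hBw
        exact hBw
      set n : V3 := v ⨯₃ u0 with hn
      have hnne : n ≠ 0 := fun hc => hv (by rw [← neg_cross, ← hn, hc, neg_zero])
      have hBn : B *ᵥ n = n := by rw [hn, ← so3_cross hB, hBv, hBu]
      set C : Matrix (Fin 3) (Fin 3) ℝ := Matrix.of fun i j => ![v, u0, n] j i with hC
      have hdet : C.det ≠ 0 := by
        have h1 : C.det = v ⬝ᵥ (u0 ⨯₃ n) := by
          simp [hC, Matrix.det_fin_three, crossProduct, dotProduct, Fin.sum_univ_three]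
          ring
        rw [h1, hn, triple]
        rw [Ne, dotProduct_self_eq_zero]
        exact hnne
      have hBC : B * C = C := by
        ext i j
        fin_cases j
        · have h := congrFun hBv i
          simp only [Matrix.mulVec, dotProduct, Fin.sum_univ_three] at h
          simpa [hC, Matrix.mul_apply, Fin.sum_univ_three] using h
        · have h := congrFun hBu i
          simp only [Matrix.mulVec, dotProduct, Fin.sum_univ_three] at h
          simpa [hC, Matrix.mul_apply, Fin.sum_univ_three] using h
        · have h := congrFun hBn i
          simp only [Matrix.mulVec, dotProduct, Fin.sum_univ_three] at h
          simpa [hC, Matrix.mul_apply, Fin.sum_univ_three] using h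
      have hCinv : C * C⁻¹ = 1 := Matrix.mul_nonsing_inv C (isUnit_iff_ne_zero.mpr hdet)
      have hBone : B = 1 := by
        calc B = B * (C * C⁻¹) := by rw [hCinv, Matrix.mul_one]
        _ = (B * C) * C⁻¹ := by rw [Matrix.mul_assoc]
        _ = C * C⁻¹ := by rw [hBC]
        _ = 1 := hCinv
      simp [G4, hBone, hb]
    · rintro g hg
      simp only [G4, Set.mem_singleton_iff] at hg
      subst hg
      exact mem_isotropy_self _

lemma cross_add_left (x y z : V3) : (x + y) ⨯₃ z = x ⨯₃ z + y ⨯₃ z := by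
  rw [LinearMap.map_add, LinearMap.add_apply]

lemma S_preserve {u0 : V3} {A : Matrix (Fin 3) (Fin 3) ℝ} {a : V3} (hA : SO3 A)
    (hAu : A *ᵥ u0 = u0) (ξ : ℝ) (ha : a = ξ • u0) {m : M2B}
    (hm : Jmom m = (0, u0) ∧ isotropy m = G4) :
    Jmom (act A a m) = (0, u0) ∧ isotropy (act A a m) = G4 := by
  obtain ⟨hJ, hiso⟩ := hm
  obtain ⟨q1, q2, p1, p2⟩ := m
  simp only [Jmom, Prod.mk.injEq] at hJ
  obtain ⟨hJ1, hJ2⟩ := hJ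
  refine ⟨?_, isotropy_conj hA a hiso⟩
  refine Prod.ext ?_ ?_
  · show (A *ᵥ q1 + a) ⨯₃ (A *ᵥ p1) + (A *ᵥ q2 + a) ⨯₃ (A *ᵥ p2) = 0
    rw [cross_add_left, cross_add_left, so3_cross hA, so3_cross hA]
    have e2 : a ⨯₃ (A *ᵥ p1) + a ⨯₃ (A *ᵥ p2) = a ⨯₃ (A *ᵥ (p1 + p2)) := by
      rw [Matrix.mulVec_add, map_add]
    have e3 : a ⨯₃ (A *ᵥ (p1 + p2)) = 0 := by
      rw [hJ2, hAu, ha, LinearMap.map_smul, LinearMap.smul_apply, cross_self, smul_zero]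
    have e4 : A *ᵥ (q1 ⨯₃ p1) + A *ᵥ (q2 ⨯₃ p2) = 0 := by
      rw [← Matrix.mulVec_add, hJ1, Matrix.mulVec_zero]
    have e5 : A *ᵥ (q1 ⨯₃ p1) + a ⨯₃ (A *ᵥ p1) + (A *ᵥ (q2 ⨯₃ p2) + a ⨯₃ (A *ᵥ p2)) =
        (A *ᵥ (q1 ⨯₃ p1) + A *ᵥ (q2 ⨯₃ p2)) + (a ⨯₃ (A *ᵥ p1) + a ⨯₃ (A *ᵥ p2)) := by
      abel
    rw [e5, e4, zero_add, e2, e3]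
  · show A *ᵥ p1 + A *ᵥ p2 = u0
    rw [← Matrix.mulVec_add, hJ2, hAu]

end Stmt16Aux

/-- Optimal isotropy group of Case 7: (A,a) preserves S = J⁻¹(0,u₀) ∩ M_{G⁴} iff
Au₀ = u₀ and a = ξu₀; moreover this group acts freely on S. -/
theorem stmt16 (u0 : V3) (hu : u0 ≠ 0) :
    (∀ (A : Matrix (Fin 3) (Fin 3) ℝ) (a : V3), SO3 A →
      (act A a '' {m : M2B | Jmom m = (0, u0) ∧ isotropy m = G4} =
          {m : M2B | Jmom m = (0, u0) ∧ isotropy m = G4} ↔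
        (A *ᵥ u0 = u0 ∧ ∃ ξ : ℝ, a = ξ • u0))) ∧
    ∀ (A : Matrix (Fin 3) (Fin 3) ℝ) (a : V3), SO3 A → A *ᵥ u0 = u0 →
      (∃ ξ : ℝ, a = ξ • u0) →
      ∀ m ∈ {m : M2B | Jmom m = (0, u0) ∧ isotropy m = G4},
        act A a m = m → A = 1 ∧ a = 0 := by
  constructor
  · intro A a hA
    constructor
    · intro hImg
      obtain ⟨v, hv⟩ := exists_indep hu
      have hm0 := m0_mem hv
      have him : act A a ((0 : V3), (0 : V3), v, u0 - v) ∈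
          {m : M2B | Jmom m = (0, u0) ∧ isotropy m = G4} := by
        rw [← hImg]
        exact ⟨_, hm0, rfl⟩
      obtain ⟨hJ', _⟩ := him
      simp only [Jmom, act, Prod.mk.injEq, Matrix.mulVec_zero, zero_add] at hJ'
      obtain ⟨hJ1, hJ2⟩ := hJ'
      have hAu : A *ᵥ u0 = u0 := by
        rw [← Matrix.mulVec_add] at hJ2
        rwa [show v + (u0 - v) = u0 by abel] at hJ2
      have hcross : a ⨯₃ u0 = 0 := by
        have e : a ⨯₃ (A *ᵥ v) + a ⨯₃ (A *ᵥ (u0 - v)) = a ⨯₃ u0 := by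
          rw [← map_add, ← Matrix.mulVec_add, show v + (u0 - v) = u0 by abel, hAu]
        rw [← e]; exact hJ1
      exact ⟨hAu, cross_zero_collinear hu hcross⟩
    · rintro ⟨hAu, ξ, ha⟩
      apply Set.eq_of_subset_of_subset
      · rintro x ⟨m, hm, rfl⟩
        exact S_preserve hA hAu ξ ha hm
      · intro m hm
        have hAtu : Aᵀ *ᵥ u0 = u0 := by
          conv_lhs => rw [← hAu]
          rw [Matrix.mulVec_mulVec, hA.1, Matrix.one_mulVec]
        have ha' : -(Aᵀ *ᵥ a) = (-ξ) • u0 := by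
          rw [ha, Matrix.mulVec_smul, hAtu, neg_smul]
        exact ⟨act Aᵀ (-(Aᵀ *ᵥ a)) m,
          S_preserve (so3_transpose hA) hAtu (-ξ) ha' hm, act_inv_right hA a m⟩
  · intro A a hA hAu hξ m hm hfix
    have hmem : (A, a) ∈ isotropy m := ⟨hA, hfix⟩
    rw [hm.2] at hmem
    simpa [G4, Prod.ext_iff] using hmem
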